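/- Let a, b > 0, n ≥ 1, α > β ≥ 0, γ < 0 with 4γ(α−β) + nα²b ≥ 0, and set T = (nα²/(2(α−β)(−aγ)))·(2((α−β)/(nα²))γ + b). Define ψ₁(t) = nα²/(2(α−β)t) and ψ₂(t) = −anα²γ(e^{2a(t−T)} + 1)/(nα²b(e^{2a(t−T)} + 1) + 4γ(α−β)). Then ψ₁(T) = ψ₂(T) = −aγ/(2((α−β)/(nα²))γ + b) and ψ₁'(T) = ψ₂'(T) = −2n(α−β)a²α²γ²/(nα²b + 2γ(α−β))². -/

import Mathlib

/-- C¹ matching of the two branches `ψ₁`, `ψ₂` of the correction function at `t = T`. -/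
theorem psi_c1_matching (n : ℕ) (hn : 1 ≤ n) (a b α β γ : ℝ)
    (ha : 0 < a) (hb : 0 < b) (hβ : 0 ≤ β) (hαβ : β < α) (hγ : γ < 0)
    (hd : 0 ≤ 4 * γ * (α - β) + n * α ^ 2 * b) :
    let T := (n * α ^ 2 / (2 * (α - β) * (-(a * γ)))) *
      (2 * ((α - β) / (n * α ^ 2)) * γ + b)
    let ψ₁ := fun t : ℝ => n * α ^ 2 / (2 * (α - β) * t)
    let ψ₂ := fun t : ℝ => -(a * n * α ^ 2 * γ * (Real.exp (2 * a * (t - T)) + 1)) /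
      (n * α ^ 2 * b * (Real.exp (2 * a * (t - T)) + 1) + 4 * γ * (α - β))
    ψ₁ T = -(a * γ) / (2 * ((α - β) / (n * α ^ 2)) * γ + b) ∧
    ψ₂ T = -(a * γ) / (2 * ((α - β) / (n * α ^ 2)) * γ + b) ∧
    deriv ψ₁ T = -(2 * n * (α - β) * a ^ 2 * α ^ 2 * γ ^ 2) /
      (n * α ^ 2 * b + 2 * γ * (α - β)) ^ 2 ∧
    deriv ψ₂ T = -(2 * n * (α - β) * a ^ 2 * α ^ 2 * γ ^ 2) /
      (n * α ^ 2 * b + 2 * γ * (α - β)) ^ 2 := by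
  intro T ψ₁ ψ₂
  have hα : 0 < α := lt_of_le_of_lt hβ hαβ
  have hn' : (1:ℝ) ≤ (n:ℝ) := by exact_mod_cast hn
  have hN : 0 < (n:ℝ) * α ^ 2 := by nlinarith
  have hab : 0 < α - β := sub_pos.mpr hαβ
  have hM : 0 < (n:ℝ) * α ^ 2 * b + 2 * γ * (α - β) := by nlinarith
  have hD : 0 < 2 * ((α - β) / ((n:ℝ) * α ^ 2)) * γ + b := by
    have h1 : 2 * ((α - β) / ((n:ℝ) * α ^ 2)) * γ + b
        = ((n:ℝ) * α ^ 2 * b + 2 * γ * (α - β)) / ((n:ℝ) * α ^ 2) := by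
      field_simp; ring
    rw [h1]; exact div_pos hM hN
  have h2ab : 0 < 2 * (α - β) := by linarith
  have hnaγ : 0 < -(a * γ) := by nlinarith
  have hT : 0 < T := mul_pos (div_pos hN (mul_pos h2ab hnaγ)) hD
  have h2T : 0 < 2 * (α - β) * T := mul_pos h2ab hT
  have hTne : T ≠ 0 := ne_of_gt hT
  have hNne : ((n:ℝ) * α ^ 2) ≠ 0 := ne_of_gt hN
  have hMne : ((n:ℝ) * α ^ 2 * b + 2 * γ * (α - β)) ≠ 0 := ne_of_gt hM
  have hDne : (2 * ((α - β) / ((n:ℝ) * α ^ 2)) * γ + b) ≠ 0 := ne_of_gt hD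
  have haγ : a * γ ≠ 0 := by
    exact mul_ne_zero (ne_of_gt ha) (ne_of_lt hγ)
  have habne : (α - β) ≠ 0 := ne_of_gt hab
  have hγne : γ ≠ 0 := ne_of_lt hγ
  -- value of ψ₁ at T
  have h1 : ψ₁ T = -(a * γ) / (2 * ((α - β) / ((n:ℝ) * α ^ 2)) * γ + b) := by
    show (n:ℝ) * α ^ 2 / (2 * (α - β) * T) = _
    rw [div_eq_div_iff (ne_of_gt h2T) hDne]
    show (n:ℝ) * α ^ 2 * (2 * ((α - β) / ((n:ℝ) * α ^ 2)) * γ + b) =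
      -(a * γ) * (2 * (α - β) * ((n * α ^ 2 / (2 * (α - β) * (-(a * γ)))) *
      (2 * ((α - β) / (n * α ^ 2)) * γ + b)))
    field_simp
  have h2 : ψ₂ T = -(a * γ) / (2 * ((α - β) / ((n:ℝ) * α ^ 2)) * γ + b) := by
    show -(a * n * α ^ 2 * γ * (Real.exp (2 * a * (T - T)) + 1)) /
      (n * α ^ 2 * b * (Real.exp (2 * a * (T - T)) + 1) + 4 * γ * (α - β)) = _
    rw [sub_self, mul_zero, Real.exp_zero]
    rw [div_eq_div_iff (by nlinarith) hDne]
    field_simp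
    ring
  -- derivative of ψ₁
  have hd1 : HasDerivAt ψ₁ (-((n:ℝ) * α ^ 2 * (2 * (α - β))) / (2 * (α - β) * T)^2) T := by
    have hv : HasDerivAt (fun t : ℝ => 2 * (α - β) * t) (2 * (α - β)) T := by
      simpa using (hasDerivAt_id T).const_mul (2 * (α - β))
    have := (hasDerivAt_const T ((n:ℝ) * α ^ 2)).div hv (ne_of_gt h2T)
    exact this.congr_deriv (by ring)
  -- derivative of exp part
  have hEx : HasDerivAt (fun t : ℝ => Real.exp (2 * a * (t - T)) + 1) (2 * a) T := by
    have h0 : HasDerivAt (fun t : ℝ => 2 * a * (t - T)) (2 * a) T := by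
      simpa using ((hasDerivAt_id T).sub_const T).const_mul (2 * a)
    have := (h0.exp).add_const 1
    simpa using this
  have hd2 : HasDerivAt ψ₂
      (((-(a * n * α ^ 2 * γ * (2 * a))) * (n * α ^ 2 * b * 2 + 4 * γ * (α - β))
        - (-(a * n * α ^ 2 * γ * 2)) * (n * α ^ 2 * b * (2 * a)))
        / (n * α ^ 2 * b * 2 + 4 * γ * (α - β)) ^ 2) T := by
    have hu : HasDerivAt (fun t : ℝ => -(a * n * α ^ 2 * γ * (Real.exp (2 * a * (t - T)) + 1)))
        (-(a * n * α ^ 2 * γ * (2 * a))) T := by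
      have := (hEx.const_mul (a * n * α ^ 2 * γ)).neg
      exact this
    have hv : HasDerivAt (fun t : ℝ => n * α ^ 2 * b * (Real.exp (2 * a * (t - T)) + 1) + 4 * γ * (α - β))
        ((n:ℝ) * α ^ 2 * b * (2 * a)) T := by
      have := (hEx.const_mul ((n:ℝ) * α ^ 2 * b)).add_const (4 * γ * (α - β))
      simpa using this
    have hvne : (n:ℝ) * α ^ 2 * b * (Real.exp (2 * a * (T - T)) + 1) + 4 * γ * (α - β) ≠ 0 := by
      rw [sub_self, mul_zero, Real.exp_zero]; nlinarith
    have := hu.div hv hvne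
    exact this.congr_deriv (by rw [sub_self, mul_zero, Real.exp_zero]; ring)
  constructor
  · exact h1
  constructor
  · exact h2
  constructor
  · rw [hd1.deriv]
    rw [div_eq_div_iff (pow_ne_zero _ (ne_of_gt h2T)) (pow_ne_zero _ hMne)]
    show -((n:ℝ) * α ^ 2 * (2 * (α - β))) * ((n:ℝ) * α ^ 2 * b + 2 * γ * (α - β)) ^ 2 =
      -(2 * n * (α - β) * a ^ 2 * α ^ 2 * γ ^ 2) *
        (2 * (α - β) * ((n * α ^ 2 / (2 * (α - β) * (-(a * γ)))) *
          (2 * ((α - β) / (n * α ^ 2)) * γ + b))) ^ 2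
    field_simp
    ring
  · rw [hd2.deriv]
    have hden : ((n:ℝ) * α ^ 2 * b * 2 + 4 * γ * (α - β)) ≠ 0 := by nlinarith
    rw [div_eq_div_iff (pow_ne_zero _ hden) (pow_ne_zero _ hMne)]
    field_simp
    ring
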